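/- Let A ∈ ℝ^{d×d} be power bounded, i.e., sup_{k ∈ ℕ} ‖A^k‖ < ∞ (equivalently, the discrete-time linear system x(t+1) = A x(t) is Lyapunov stable, i.e., all of its solutions are bounded). Then there exists a symmetric positive definite matrix P ∈ ℝ^{d×d} such that ⟨P (A x), A x⟩ ≤ ⟨P x, x⟩ for all x ∈ ℝ^d. -/

import Mathlib

open Matrix ContinuousLinearMap Finset
open scoped RealInnerProductSpace

set_option maxHeartbeats 1000000
set_option synthInstance.maxHeartbeats 200000

section Aux
variable {d : ℕ}

local notation "L" => EuclideanSpace ℝ (Fin d) →L[ℝ] EuclideanSpace ℝ (Fin d)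

theorem exists_omega_idempotent (f : L) (C : ℝ) (hC : ∀ k : ℕ, ‖f ^ k‖ ≤ C) :
    ∃ e : L, e * e = e ∧ e * f = f * e ∧
      ∀ N : ℕ, ∀ ε : ℝ, 0 < ε → ∃ n, N ≤ n ∧ ‖f ^ n - e‖ < ε := by
  set S : ℕ → Set L := fun N => closure ((fun n => f ^ n) '' Set.Ici N) with hS
  have hSanti : ∀ {N M : ℕ}, N ≤ M → S M ⊆ S N := by
    intro N M h
    exact closure_mono (Set.image_mono (Set.Ici_subset_Ici.2 h))
  have hSclosed : ∀ N, IsClosed (S N) := fun N => isClosed_closure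
  have hSne : ∀ N, (S N).Nonempty :=
    fun N => ⟨f ^ N, subset_closure ⟨N, le_refl N, rfl⟩⟩
  have hSsub : ∀ N, S N ⊆ Metric.closedBall 0 C := by
    intro N
    rw [hS]
    refine closure_minimal ?_ Metric.isClosed_closedBall
    rintro - ⟨n, -, rfl⟩
    simpa [dist_zero_right] using hC n
  have hScompact : ∀ N, IsCompact (S N) := by
    intro N
    exact (isCompact_closedBall (0 : L) C).of_isClosed_subset (hSclosed N) (hSsub N)
  -- membership moving lemma
  have hmul_pow : ∀ (m N : ℕ) (y : L), y ∈ S N → f ^ m * y ∈ S (m + N) := by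
    intro m N y hy
    have hcont : Continuous fun z : L => f ^ m * z := continuous_mul_left _
    have h1 : f ^ m * y ∈ closure ((fun z : L => f ^ m * z) '' ((fun n => f ^ n) '' Set.Ici N)) := by
      have := image_closure_subset_closure_image (s := ((fun n => f ^ n) '' Set.Ici N)) hcont
      exact this ⟨y, hy, rfl⟩
    refine closure_mono ?_ h1
    rintro - ⟨-, ⟨n, hn, rfl⟩, rfl⟩
    exact ⟨m + n, Nat.add_le_add_left hn m, by simp [pow_add]⟩
  set Ω : Set L := ⋂ N, S N with hΩ
  have hΩne : Ω.Nonempty := by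
    refine IsCompact.nonempty_iInter_of_sequence_nonempty_isCompact_isClosed S
      (fun i => hSanti (Nat.le_succ i)) hSne (hScompact 0) hSclosed
  have hΩcompact : IsCompact Ω :=
    (hScompact 0).of_isClosed_subset (isClosed_iInter hSclosed) (Set.iInter_subset S 0)
  have hΩmul : ∀ x ∈ Ω, ∀ y ∈ Ω, x * y ∈ Ω := by
    intro x hx y hy
    rw [hΩ, Set.mem_iInter]
    intro N
    have hx0 : x ∈ S 0 := (Set.mem_iInter.1 hx) 0
    have hcont : Continuous fun z : L => z * y := continuous_mul_right _
    have h1 : x * y ∈ closure ((fun z : L => z * y) '' ((fun n => f ^ n) '' Set.Ici 0)) := by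
      have := image_closure_subset_closure_image (s := ((fun n => f ^ n) '' Set.Ici 0)) hcont
      exact this ⟨x, hx0, rfl⟩
    have h2 : ((fun z : L => z * y) '' ((fun n => f ^ n) '' Set.Ici 0)) ⊆ S N := by
      rintro - ⟨-, ⟨n, -, rfl⟩, rfl⟩
      have := hmul_pow n N y ((Set.mem_iInter.1 hy) N)
      exact hSanti (Nat.le_add_left N n) this
    exact (closure_minimal h2 (hSclosed N)) h1
  obtain ⟨e, heΩ, hee⟩ := exists_idempotent_in_compact_subsemigroup
    (fun r => continuous_mul_right r) Ω hΩne hΩcompact hΩmul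
  refine ⟨e, hee, ?_, ?_⟩
  · -- commutes with f
    have h0 : e ∈ S 0 := (Set.mem_iInter.1 heΩ) 0
    have hcl : IsClosed {z : L | z * f = f * z} :=
      isClosed_eq (continuous_mul_right f) (continuous_mul_left f)
    have hsub : ((fun n => f ^ n) '' Set.Ici 0) ⊆ {z : L | z * f = f * z} := by
      rintro - ⟨n, -, rfl⟩
      show f ^ n * f = f * f ^ n
      rw [← pow_succ, ← pow_succ']
    exact (closure_minimal hsub hcl) h0
  · intro N ε hε
    have hN : e ∈ S N := (Set.mem_iInter.1 heΩ) N
    rw [hS] at hN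
    rcases Metric.mem_closure_iff.1 hN ε hε with ⟨b, ⟨n, hn, rfl⟩, hb⟩
    exact ⟨n, hn, by rwa [← dist_eq_norm, dist_comm]⟩

theorem exists_lyap_clm (f : L) (C : ℝ) (hC : ∀ k : ℕ, ‖f ^ k‖ ≤ C) :
    ∃ S : L, IsSelfAdjoint S ∧ (∀ x, x ≠ 0 → 0 < ⟪S x, x⟫) ∧
      ∀ x, ⟪S (f x), f x⟫ ≤ ⟪S x, x⟫ := by
  -- replace C by C' = max C 1
  set C' : ℝ := max C 1 with hC'def
  have hC'1 : (1 : ℝ) ≤ C' := le_max_right _ _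
  have hC'0 : (0 : ℝ) < C' := lt_of_lt_of_le one_pos hC'1
  have hC' : ∀ k : ℕ, ‖f ^ k‖ ≤ C' := fun k => (hC k).trans (le_max_left _ _)
  obtain ⟨e, hee, hef, htail⟩ := exists_omega_idempotent f C' hC'
  set u : L := 1 - e with hu
  have huu : u * u = u := by
    rw [hu, sub_mul, one_mul, mul_sub, mul_one, hee]; abel
  have heu : e * u = 0 := by
    rw [hu, mul_sub, mul_one, hee, sub_self]
  have huf : u * f = f * u := by
    rw [hu, sub_mul, mul_sub, one_mul, mul_one, hef]
  have hufk : ∀ k : ℕ, u * f ^ k = f ^ k * u := by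
    intro k
    induction k with
    | zero => simp
    | succ n ih => rw [pow_succ, ← mul_assoc, ih, mul_assoc, huf, ← mul_assoc]
  -- find n₀ ≥ 1 with ‖f ^ n₀ * u‖ ≤ 1 / 2
  obtain ⟨n₀, hn₀1, hn₀⟩ : ∃ n₀, 1 ≤ n₀ ∧ ‖f ^ n₀ * u‖ ≤ 1 / 2 := by
    obtain ⟨n, hn1, hn⟩ := htail 1 (1 / (2 * (‖u‖ + 1)))
      (by positivity)
    refine ⟨n, hn1, ?_⟩
    have h1 : f ^ n * u = (f ^ n - e) * u := by rw [sub_mul, heu, sub_zero]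
    rw [h1]
    calc ‖(f ^ n - e) * u‖ ≤ ‖f ^ n - e‖ * ‖u‖ := norm_mul_le _ _
      _ ≤ (1 / (2 * (‖u‖ + 1))) * ‖u‖ := by
          apply mul_le_mul_of_nonneg_right hn.le (norm_nonneg _)
      _ ≤ 1 / 2 := by
          rw [div_mul_eq_mul_div, one_mul, div_le_div_iff₀ (by positivity) two_pos]
          nlinarith [norm_nonneg u]
  -- the finite-horizon Lyapunov operator for the stable part
  set T : L := ∑ k ∈ range n₀, adjoint (f ^ k * u) * (f ^ k * u) with hT
  have hTapp : ∀ x, ⟪T x, x⟫ = ∑ k ∈ range n₀, ‖(f ^ k * u) x‖ ^ 2 := by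
    intro x
    rw [hT]
    rw [ContinuousLinearMap.sum_apply, sum_inner]
    refine Finset.sum_congr rfl fun k _ => ?_
    rw [ContinuousLinearMap.mul_apply, adjoint_inner_left, real_inner_self_eq_norm_sq]
  have hstar : ∀ B : L, star (adjoint B * B) = adjoint B * B := by
    intro B
    rw [StarMul.star_mul, star_eq_adjoint, star_eq_adjoint, adjoint_adjoint]
  have hTsa : IsSelfAdjoint T := by
    rw [isSelfAdjoint_iff, hT]
    exact (map_sum (starAddEquiv (R := EuclideanSpace ℝ (Fin d) →L[ℝ] EuclideanSpace ℝ (Fin d)))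
      (fun k => adjoint (f ^ k * u) * (f ^ k * u)) (range n₀)).trans
      (Finset.sum_congr rfl fun k _ => hstar _)
  -- basic facts about T
  have hfk_u_f : ∀ k : ℕ, (f ^ k * u) * f = f ^ (k + 1) * u := by
    intro k
    rw [mul_assoc, huf, ← mul_assoc, ← pow_succ]
  have hg0 : f ^ 0 * u = u := by rw [pow_zero, one_mul]
  have hshift : ∀ g : ℕ → ℝ, ∑ k ∈ range n₀, g (k + 1) =
      ∑ k ∈ range n₀, g k + g n₀ - g 0 := by
    intro g
    have h1 := Finset.sum_range_succ' g n₀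
    have h2 := Finset.sum_range_succ g n₀
    linarith
  have hTn₀ : ∀ x, ‖(f ^ n₀ * u) x‖ ≤ (1 / 2) * ‖u x‖ := by
    intro x
    have h1 : (f ^ n₀ * u) x = (f ^ n₀ * u) (u x) := by
      conv_lhs => rw [← huu, ← mul_assoc]
      rw [ContinuousLinearMap.mul_apply]
    rw [h1]
    calc ‖(f ^ n₀ * u) (u x)‖ ≤ ‖f ^ n₀ * u‖ * ‖u x‖ := le_opNorm _ _
      _ ≤ (1 / 2) * ‖u x‖ := mul_le_mul_of_nonneg_right hn₀ (norm_nonneg _)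
  have hTdec : ∀ x, ⟪T (f x), f x⟫ ≤ ⟪T x, x⟫ := by
    intro x
    rw [hTapp, hTapp]
    have h1 : ∀ k : ℕ, (f ^ k * u) (f x) = (f ^ (k + 1) * u) x := by
      intro k
      rw [← hfk_u_f k]
      exact (ContinuousLinearMap.mul_apply (f ^ k * u) f x).symm
    calc ∑ k ∈ range n₀, ‖(f ^ k * u) (f x)‖ ^ 2
        = ∑ k ∈ range n₀, ‖(f ^ (k + 1) * u) x‖ ^ 2 := by
          exact Finset.sum_congr rfl fun k _ => by rw [h1]
      _ = ∑ k ∈ range n₀, ‖(f ^ k * u) x‖ ^ 2 + ‖(f ^ n₀ * u) x‖ ^ 2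
          - ‖(f ^ 0 * u) x‖ ^ 2 := hshift (fun k => ‖(f ^ k * u) x‖ ^ 2)
      _ ≤ ∑ k ∈ range n₀, ‖(f ^ k * u) x‖ ^ 2 := by
          have h2 : ‖(f ^ n₀ * u) x‖ ^ 2 ≤ ‖(f ^ 0 * u) x‖ ^ 2 := by
            rw [hg0]
            have := hTn₀ x
            nlinarith [norm_nonneg ((f ^ n₀ * u) x), norm_nonneg (u x)]
          linarith
  have hTpos : ∀ x, 0 ≤ ⟪T x, x⟫ := by
    intro x
    rw [hTapp]
    exact Finset.sum_nonneg fun k _ => sq_nonneg _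
  have hTlow : ∀ x, ‖u x‖ ^ 2 ≤ ⟪T x, x⟫ := by
    intro x
    rw [hTapp]
    have := Finset.single_le_sum (f := fun k => ‖(f ^ k * u) x‖ ^ 2)
      (fun i _ => sq_nonneg _) (Finset.mem_range.2 hn₀1)
    simpa only [hg0] using this
  -- Cesàro averages
  set Qa : ℕ → L := fun N => (N : ℝ)⁻¹ • ∑ k ∈ range N, adjoint (f ^ k) * (f ^ k) with hQa
  have hQaApp : ∀ N x, ⟪Qa N x, x⟫ = (N : ℝ)⁻¹ * ∑ k ∈ range N, ‖(f ^ k) x‖ ^ 2 := by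
    intro N x
    show ⟪((N : ℝ)⁻¹ • ∑ k ∈ range N, adjoint (f ^ k) * (f ^ k)) x, x⟫ =
      (N : ℝ)⁻¹ * ∑ k ∈ range N, ‖(f ^ k) x‖ ^ 2
    simp only [ContinuousLinearMap.smul_apply, real_inner_smul_left]
    congr 1
    rw [ContinuousLinearMap.sum_apply, sum_inner]
    refine Finset.sum_congr rfl fun k _ => ?_
    rw [ContinuousLinearMap.mul_apply, adjoint_inner_left, real_inner_self_eq_norm_sq]
  have hQaBound : ∀ N, Qa N ∈ Metric.closedBall (0 : L) (C' ^ 2) := by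
    intro N
    rw [Metric.mem_closedBall, dist_zero_right]
    show ‖(N : ℝ)⁻¹ • ∑ k ∈ range N, adjoint (f ^ k) * (f ^ k)‖ ≤ C' ^ 2
    have h1 : ‖∑ k ∈ range N, adjoint (f ^ k) * (f ^ k)‖ ≤ (N : ℝ) * C' ^ 2 := by
      calc ‖∑ k ∈ range N, adjoint (f ^ k) * (f ^ k)‖
          ≤ ∑ k ∈ range N, ‖adjoint (f ^ k) * (f ^ k)‖ := norm_sum_le _ _
        _ ≤ ∑ k ∈ range N, C' ^ 2 := by
            refine Finset.sum_le_sum fun k _ => ?_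
            calc ‖adjoint (f ^ k) * (f ^ k)‖ ≤ ‖adjoint (f ^ k)‖ * ‖f ^ k‖ := norm_mul_le _ _
              _ = ‖f ^ k‖ * ‖f ^ k‖ := by
                  rw [LinearIsometryEquiv.norm_map (adjoint (𝕜 := ℝ)) (f ^ k)]
              _ ≤ C' * C' := mul_le_mul (hC' k) (hC' k) (norm_nonneg _) hC'0.le
              _ = C' ^ 2 := (sq C').symm
        _ = (N : ℝ) * C' ^ 2 := by rw [Finset.sum_const, Finset.card_range, nsmul_eq_mul]
    rcases Nat.eq_zero_or_pos N with hN | hN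
    · subst hN; simp; positivity
    · have hNR : (0 : ℝ) < N := by exact_mod_cast hN
      have h2 : ‖(N : ℝ)⁻¹ • ∑ k ∈ range N, adjoint (f ^ k) * (f ^ k)‖ ≤
          ‖(N : ℝ)⁻¹‖ * ‖∑ k ∈ range N, adjoint (f ^ k) * (f ^ k)‖ := ContinuousLinearMap.opNorm_smul_le _ _
      refine h2.trans ?_
      rw [norm_inv, Real.norm_natCast, inv_mul_le_iff₀ hNR]
      linarith [h1]
  obtain ⟨Q, -, ψ, hψmono, hψtend⟩ :=
    tendsto_subseq_of_bounded (Metric.isBounded_closedBall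
      (x := (0 : L)) (r := C' ^ 2)) hQaBound
  -- evaluation of quadratic forms is continuous
  have hev : ∀ x : EuclideanSpace ℝ (Fin d), Continuous (fun B : L => ⟪B x, x⟫) := by
    intro x
    exact (continuous_id.clm_apply continuous_const).inner continuous_const
  have hQtend : ∀ x, Filter.Tendsto (fun j => ⟪Qa (ψ j) x, x⟫)
      Filter.atTop (nhds ⟪Q x, x⟫) := by
    intro x
    exact ((hev x).tendsto Q).comp hψtend
  have hψlarge : ∀ j, j ≤ ψ j := fun j => hψmono.le_apply
  -- Q is positive semidefinite
  have hQ0 : ∀ x, 0 ≤ ⟪Q x, x⟫ := by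
    intro x
    refine ge_of_tendsto (hQtend x) (Filter.Eventually.of_forall fun j => ?_)
    rw [hQaApp]
    positivity
  -- Q decreases along f
  have hQaDec : ∀ (N : ℕ) x, ⟪Qa N (f x), f x⟫ ≤ ⟪Qa N x, x⟫ + (N : ℝ)⁻¹ * (C' ^ 2 * ‖x‖ ^ 2) := by
    intro N x
    rw [hQaApp, hQaApp]
    have h1 : ∀ k : ℕ, (f ^ k) (f x) = (f ^ (k + 1)) x := by
      intro k
      rw [pow_succ]
      exact (ContinuousLinearMap.mul_apply (f ^ k) f x).symm
    have h2 : ∑ k ∈ range N, ‖(f ^ k) (f x)‖ ^ 2 = ∑ k ∈ range N, ‖(f ^ (k + 1)) x‖ ^ 2 :=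
      Finset.sum_congr rfl fun k _ => by rw [h1]
    have h3 : ∑ k ∈ range N, ‖(f ^ (k + 1)) x‖ ^ 2 =
        ∑ k ∈ range N, ‖(f ^ k) x‖ ^ 2 + ‖(f ^ N) x‖ ^ 2 - ‖(f ^ 0) x‖ ^ 2 := by
      have ha := Finset.sum_range_succ' (fun k => ‖(f ^ k) x‖ ^ 2) N
      have hb := Finset.sum_range_succ (fun k => ‖(f ^ k) x‖ ^ 2) N
      linarith
    have h4 : ‖(f ^ N) x‖ ^ 2 ≤ C' ^ 2 * ‖x‖ ^ 2 := by
      have := (f ^ N).le_opNorm x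
      have h5 : ‖(f ^ N) x‖ ≤ C' * ‖x‖ :=
        this.trans (mul_le_mul_of_nonneg_right (hC' N) (norm_nonneg x))
      nlinarith [norm_nonneg ((f ^ N) x), norm_nonneg x]
    have h6 : (0 : ℝ) ≤ ‖(f ^ 0) x‖ ^ 2 := sq_nonneg _
    have h7 : (0 : ℝ) ≤ (N : ℝ)⁻¹ := by positivity
    rw [h2, h3]
    rw [mul_sub, mul_add]
    nlinarith [mul_le_mul_of_nonneg_left h4 h7, mul_le_mul_of_nonneg_left h6 h7]
  have hQdec : ∀ x, ⟪Q (f x), f x⟫ ≤ ⟪Q x, x⟫ := by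
    intro x
    have hinv : Filter.Tendsto (fun j => ((ψ j : ℕ) : ℝ)⁻¹) Filter.atTop (nhds 0) := by
      refine Filter.Tendsto.comp tendsto_inv_atTop_zero ?_
      exact Filter.Tendsto.comp tendsto_natCast_atTop_atTop hψmono.tendsto_atTop
    have hRHS : Filter.Tendsto
        (fun j => ⟪Qa (ψ j) x, x⟫ + ((ψ j : ℕ) : ℝ)⁻¹ * (C' ^ 2 * ‖x‖ ^ 2))
        Filter.atTop (nhds (⟪Q x, x⟫ + 0 * (C' ^ 2 * ‖x‖ ^ 2))) :=
      (hQtend x).add (hinv.mul tendsto_const_nhds)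
    rw [zero_mul, add_zero] at hRHS
    exact le_of_tendsto_of_tendsto' (hQtend (f x)) hRHS fun j => hQaDec (ψ j) x
  -- lower bound on the range of e
  have hnormlow : ∀ (k : ℕ) x, u x = 0 → ‖x‖ ≤ C' * ‖(f ^ k) x‖ := by
    intro k x hx
    have hex : e x = x := by
      have h0 : x - e x = 0 := by
        rw [hu] at hx
        simpa [ContinuousLinearMap.sub_apply] using hx
      have := sub_eq_zero.mp h0
      exact this.symm
    refine le_of_forall_pos_le_add ?_
    intro ε hε
    obtain ⟨n, hkn, hn⟩ := htail k (ε / (‖x‖ + 1)) (by positivity)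
    have hfn : (f ^ n) x = (f ^ (n - k)) ((f ^ k) x) := by
      rw [← ContinuousLinearMap.mul_apply, ← pow_add]
      congr 2
      omega
    have h1 : ‖x‖ = ‖e x‖ := by rw [hex]
    have h2 : ‖e x - (f ^ n) x‖ ≤ (ε / (‖x‖ + 1)) * ‖x‖ := by
      have hs : e x - (f ^ n) x = (e - f ^ n) x := by
        rw [ContinuousLinearMap.sub_apply]
      rw [hs]
      have hns : ‖e - f ^ n‖ ≤ ε / (‖x‖ + 1) := by
        rw [← norm_neg]
        simpa [neg_sub] using hn.le
      calc ‖(e - f ^ n) x‖ ≤ ‖e - f ^ n‖ * ‖x‖ := le_opNorm _ _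
        _ ≤ (ε / (‖x‖ + 1)) * ‖x‖ := mul_le_mul_of_nonneg_right hns (norm_nonneg x)
    have h3 : ‖(f ^ n) x‖ ≤ C' * ‖(f ^ k) x‖ := by
      rw [hfn]
      calc ‖(f ^ (n - k)) ((f ^ k) x)‖ ≤ ‖f ^ (n - k)‖ * ‖(f ^ k) x‖ := le_opNorm _ _
        _ ≤ C' * ‖(f ^ k) x‖ := mul_le_mul_of_nonneg_right (hC' _) (norm_nonneg _)
    have h4 : (ε / (‖x‖ + 1)) * ‖x‖ ≤ ε := by
      rw [div_mul_eq_mul_div, div_le_iff₀ (by positivity : (0:ℝ) < ‖x‖ + 1)]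
      nlinarith [norm_nonneg x, hε.le]
    have h5 : ‖e x‖ ≤ ‖e x - (f ^ n) x‖ + ‖(f ^ n) x‖ := by
      have := norm_add_le (e x - (f ^ n) x) ((f ^ n) x)
      simpa using this
    calc ‖x‖ = ‖e x‖ := h1
      _ ≤ ‖e x - (f ^ n) x‖ + ‖(f ^ n) x‖ := h5
      _ ≤ (ε / (‖x‖ + 1)) * ‖x‖ + C' * ‖(f ^ k) x‖ := add_le_add h2 h3
      _ ≤ C' * ‖(f ^ k) x‖ + ε := by linarith
  have hQlow : ∀ x, u x = 0 → ‖x‖ ^ 2 / C' ^ 2 ≤ ⟪Q x, x⟫ := by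
    intro x hx
    refine ge_of_tendsto (hQtend x) ?_
    rw [Filter.eventually_atTop]
    refine ⟨1, fun j hj => ?_⟩
    have hN1 : 1 ≤ ψ j := le_trans hj (hψlarge j)
    rw [hQaApp]
    have h1 : ∀ k ∈ range (ψ j), ‖x‖ ^ 2 / C' ^ 2 ≤ ‖(f ^ k) x‖ ^ 2 := by
      intro k _
      have hk := hnormlow k x hx
      rw [div_le_iff₀ (by positivity : (0:ℝ) < C' ^ 2)]
      nlinarith [norm_nonneg x, norm_nonneg ((f ^ k) x), hC'0]
    have h2 : ((ψ j : ℕ) : ℝ) * (‖x‖ ^ 2 / C' ^ 2) ≤ ∑ k ∈ range (ψ j), ‖(f ^ k) x‖ ^ 2 := by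
      calc ((ψ j : ℕ) : ℝ) * (‖x‖ ^ 2 / C' ^ 2)
          = ∑ _k ∈ range (ψ j), ‖x‖ ^ 2 / C' ^ 2 := by
            rw [Finset.sum_const, Finset.card_range, nsmul_eq_mul]
        _ ≤ _ := Finset.sum_le_sum h1
    have hNR : (0 : ℝ) < ((ψ j : ℕ) : ℝ) := by exact_mod_cast hN1
    have h3 := mul_le_mul_of_nonneg_left h2 (by positivity : (0:ℝ) ≤ ((ψ j : ℕ) : ℝ)⁻¹)
    rw [← mul_assoc, inv_mul_cancel₀ hNR.ne', one_mul] at h3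
    exact h3
  -- Q is self-adjoint
  have hQa_sa : ∀ N, star (Qa N) = Qa N := by
    intro N
    show star ((N : ℝ)⁻¹ • ∑ k ∈ range N, adjoint (f ^ k) * (f ^ k)) =
      (N : ℝ)⁻¹ • ∑ k ∈ range N, adjoint (f ^ k) * (f ^ k)
    rw [star_smul, star_trivial]
    congr 1
    exact (map_sum (starAddEquiv (R := EuclideanSpace ℝ (Fin d) →L[ℝ] EuclideanSpace ℝ (Fin d)))
      (fun k => adjoint (f ^ k) * (f ^ k)) (range N)).trans
      (Finset.sum_congr rfl fun k _ => hstar _)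
  have hQsa : IsSelfAdjoint Q := by
    rw [isSelfAdjoint_iff]
    have hstarcont : Continuous (star : L → L) := by
      have hfun : (star : L → L) = fun B => adjoint B := funext fun B => star_eq_adjoint B
      rw [hfun]
      exact (ContinuousLinearMap.adjoint (𝕜 := ℝ)
        (E := EuclideanSpace ℝ (Fin d)) (F := EuclideanSpace ℝ (Fin d))).continuous
    have h1 : Filter.Tendsto (fun j => star (Qa (ψ j))) Filter.atTop (nhds (star Q)) :=
      (hstarcont.tendsto Q).comp hψtend
    have h2 : (fun j => star (Qa (ψ j))) = fun j => Qa (ψ j) := funext fun j => hQa_sa _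
    rw [h2] at h1
    exact tendsto_nhds_unique h1 hψtend
  -- assemble
  refine ⟨Q + T, IsSelfAdjoint.add (R := L) hQsa hTsa, ?_, ?_⟩
  · intro x hx
    rw [ContinuousLinearMap.add_apply, inner_add_left]
    by_cases hux : u x = 0
    · have h1 := hQlow x hux
      have hxp : 0 < ‖x‖ := norm_pos_iff.2 hx
      have h2 : 0 < ‖x‖ ^ 2 / C' ^ 2 := by positivity
      linarith [hTpos x]
    · have hup : 0 < ‖u x‖ := norm_pos_iff.2 hux
      have h1 : 0 < ‖u x‖ ^ 2 := by positivity
      linarith [hTlow x, hQ0 x]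
  · intro x
    rw [ContinuousLinearMap.add_apply, ContinuousLinearMap.add_apply,
      inner_add_left, inner_add_left]
    exact add_le_add (hQdec x) (hTdec x)

end Aux

/-- The operator norm of a real matrix, induced by the Euclidean norm. -/
noncomputable def euclideanOpNorm {d : ℕ} (M : Matrix (Fin d) (Fin d) ℝ) : ℝ :=
  ‖LinearMap.toContinuousLinearMap (Matrix.toEuclideanLin M)‖

/-- If `A` is power bounded (`sup_k ‖A^k‖ < ∞` in the Euclidean operator norm), then
there is a symmetric positive definite `P` with `⟨P (A x), A x⟩ ≤ ⟨P x, x⟩` for all `x`. -/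
theorem power_bounded_lyapunov {d : ℕ} (A : Matrix (Fin d) (Fin d) ℝ)
    (hA : ∃ C : ℝ, ∀ k : ℕ, euclideanOpNorm (A ^ k) ≤ C) :
    ∃ P : Matrix (Fin d) (Fin d) ℝ, P.PosDef ∧
      ∀ x : Fin d → ℝ,
        P.mulVec (A.mulVec x) ⬝ᵥ A.mulVec x ≤ P.mulVec x ⬝ᵥ x := by
  obtain ⟨C, hC⟩ := hA
  set φ : Matrix (Fin d) (Fin d) ℝ ≃⋆ₐ[ℝ]
      (EuclideanSpace ℝ (Fin d) →L[ℝ] EuclideanSpace ℝ (Fin d)) :=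
    Matrix.toEuclideanCLM (𝕜 := ℝ) (n := Fin d) with hφ
  set f := φ A with hf
  have hnorm : ∀ k : ℕ, ‖f ^ k‖ ≤ C := by
    intro k
    have h1 : f ^ k = φ (A ^ k) := by rw [hf, map_pow]
    have h2 : euclideanOpNorm (A ^ k) = ‖φ (A ^ k)‖ := rfl
    rw [h1, ← h2]
    exact hC k
  obtain ⟨S, hSsa, hSpos, hSdec⟩ := exists_lyap_clm f C hnorm
  set P := φ.symm S with hP
  have hφP : φ P = S := by rw [hP]; exact φ.apply_symm_apply S
  have hquad : ∀ x y : Fin d → ℝ, (P.mulVec x) ⬝ᵥ y =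
      ⟪S ((WithLp.equiv 2 (Fin d → ℝ)).symm x), (WithLp.equiv 2 (Fin d → ℝ)).symm y⟫ := by
    intro x y
    rw [← hφP, hφ]
    simp [EuclideanSpace.inner_toLp_toLp, dotProduct_comm]
  have hAvec : ∀ x : Fin d → ℝ,
      f ((WithLp.equiv 2 (Fin d → ℝ)).symm x) =
        (WithLp.equiv 2 (Fin d → ℝ)).symm (A.mulVec x) := by
    intro x
    rw [hf, hφ]
    simp
  have hsymm_ne : ∀ x : Fin d → ℝ, x ≠ 0 → (WithLp.equiv 2 (Fin d → ℝ)).symm x ≠ 0 := by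
    intro x hx h
    apply hx
    have := congrArg (WithLp.equiv 2 (Fin d → ℝ)) h
    simpa using this
  refine ⟨P, Matrix.PosDef.of_dotProduct_mulVec_pos ?_ ?_, ?_⟩
  · -- Hermitian
    have h1 : star P = P := by
      rw [hP, ← map_star φ.symm S, hSsa.star_eq]
    exact h1
  · -- positive definite
    intro x hx
    have h1 := hSpos _ (hsymm_ne x hx)
    have h2 : star x = x := by
      funext i; exact star_trivial _
    rw [h2, dotProduct_comm, hquad]
    exact h1
  · -- Lyapunov inequality
    intro x
    have h1 := hSdec ((WithLp.equiv 2 (Fin d → ℝ)).symm x)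
    rw [hAvec] at h1
    rw [hquad, hquad]
    exact h1
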